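/- If 𝒯 is a standard immaculate tableau of shape α with comp(Des(𝒯)) = β, then β ≤_l α in the lexicographic order. Consequently, L_{α,β} = 0 unless β ≤_l α. -/

import Mathlib

/-- A composition of `n`: a list of positive integers summing to `n`. -/
def IsComposition (n : ℕ) (l : List ℕ) : Prop :=
  (∀ x ∈ l, 0 < x) ∧ l.sum = n

/-- `comp(I) = (i₁, i₂ - i₁, …, n - i_k)` for `I = {i₁ < ⋯ < i_k} ⊆ {1,…,n-1}`. -/
def compOf (n : ℕ) (I : Finset ℕ) : List ℕ :=
  if n = 0 then []
  else List.zipWith (fun a b => a - b) (I.sort (· ≤ ·) ++ [n]) (0 :: I.sort (· ≤ ·))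

/-- The cells of the composition diagram of `α` (0-based `(row, column)`). -/
def sitCells (α : List ℕ) : Set (ℕ × ℕ) :=
  {rc | rc.1 < α.length ∧ rc.2 < α.getD rc.1 0}

/-- A standard immaculate tableau of shape `α`, encoded by the position
`p e = (row, column)` of each entry `e ∈ {1,…,n}`. -/
def IsSIT (n : ℕ) (α : List ℕ) (p : ℕ → ℕ × ℕ) : Prop :=
  Set.BijOn p (Set.Icc 1 n) (sitCells α) ∧
  (∀ a ∈ Set.Icc 1 n, ∀ b ∈ Set.Icc 1 n,
    (p a).1 = (p b).1 → (p a).2 < (p b).2 → a < b) ∧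
  (∀ a ∈ Set.Icc 1 n, ∀ b ∈ Set.Icc 1 n,
    (p a).2 = 0 → (p b).2 = 0 → (p a).1 < (p b).1 → a < b) ∧
  (∀ e : ℕ, e ∉ Set.Icc 1 n → p e = (0, 0))

/-- The descent set of a tableau: `i ∈ {1,…,n-1}` with `i` strictly above `i+1`. -/
def sitDes (n : ℕ) (p : ℕ → ℕ × ℕ) : Finset ℕ :=
  (Finset.Icc 1 (n - 1)).filter fun i => (p i).1 < (p (i + 1)).1

namespace Stmt14

/-- partial sums of a composition -/
def ps (α : List ℕ) (k : ℕ) : ℕ := (α.take k).sum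

lemma ps_zero (α : List ℕ) : ps α 0 = 0 := rfl

lemma ps_succ (α : List ℕ) (k : ℕ) (hk : k < α.length) :
    ps α (k+1) = ps α k + α.getD k 0 := by
  unfold ps
  rw [List.take_succ, List.getElem?_eq_getElem hk, List.getD_eq_getElem _ _ hk,
    List.sum_append]
  simp

lemma ps_le_succ (α : List ℕ) (k : ℕ) : ps α k ≤ ps α (k+1) := by
  by_cases hk : k < α.length
  · rw [ps_succ α k hk]; omega
  · unfold ps
    rw [List.take_of_length_le (by omega), List.take_of_length_le (by omega)]

lemma ps_mono (α : List ℕ) {j k : ℕ} (h : j ≤ k) : ps α j ≤ ps α k := by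
  induction k with
  | zero => have hj : j = 0 := by omega
            rw [hj]
  | succ k ih =>
    rcases Nat.lt_or_ge j (k+1) with h' | h'
    · exact le_trans (ih (by omega)) (ps_le_succ α k)
    · have hj : j = k + 1 := by omega
      rw [hj]

lemma getD_pos {n : ℕ} {α : List ℕ} (hα : IsComposition n α) {k : ℕ} (hk : k < α.length) :
    0 < α.getD k 0 := by
  rw [List.getD_eq_getElem _ _ hk]
  exact hα.1 _ (List.getElem_mem hk)

lemma ps_lt {n : ℕ} {α : List ℕ} (hα : IsComposition n α) {j k : ℕ} (hj : j < k)
    (hk : k ≤ α.length) : ps α j < ps α k := by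
  have h1 : ps α (j+1) ≤ ps α k := ps_mono α hj
  have h2 : ps α j < ps α (j+1) := by
    rw [ps_succ α j (by omega)]
    have := getD_pos hα (show j < α.length by omega)
    omega
  omega

lemma ps_top {n : ℕ} {α : List ℕ} (hα : IsComposition n α) : ps α α.length = n := by
  unfold ps; rw [List.take_of_length_le (le_refl _)]; exact hα.2

lemma find_j (α : List ℕ) (k e : ℕ) (h1 : 1 ≤ e) (h2 : e ≤ ps α k) :
    ∃ j, j < k ∧ ps α j < e ∧ e ≤ ps α (j+1) := by
  induction k with
  | zero => simp [ps_zero] at h2; omega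
  | succ k ih =>
    by_cases h : e ≤ ps α k
    · obtain ⟨j, hj, h3, h4⟩ := ih h
      exact ⟨j, by omega, h3, h4⟩
    · exact ⟨k, by omega, by omega, h2⟩

/-- a finset whose membership is described by a sorted list sorts to that list. -/
lemma sort_eq (D : Finset ℕ) (l : List ℕ) (hl : l.Pairwise (· < ·))
    (h : ∀ x, x ∈ D ↔ x ∈ l) : D.sort (· ≤ ·) = l := by
  refine List.Perm.eq_of_pairwise' (Finset.pairwise_sort _ _) (hl.imp le_of_lt) ?_
  rw [List.perm_ext_iff_of_nodup (Finset.sort_nodup _ _) hl.nodup]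
  intro a
  rw [Finset.mem_sort]
  exact h a

lemma sort_split (D : Finset ℕ) (m : ℕ) :
    D.sort (· ≤ ·) = ((D.filter (fun x => x ≤ m)).sort (· ≤ ·)) ++
      ((D.filter (fun x => ¬ x ≤ m)).sort (· ≤ ·)) := by
  refine (fun hp hs => (List.Perm.eq_of_pairwise' hs (Finset.pairwise_sort _ _) hp).symm) ?_ ?_
  · rw [List.perm_ext_iff_of_nodup ?_ (Finset.sort_nodup _ _)]
    · intro a
      simp only [List.mem_append, Finset.mem_sort, Finset.mem_filter]
      constructor
      · rintro (⟨h, _⟩ | ⟨h, _⟩) <;> exact h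
      · intro h; by_cases ha : a ≤ m
        · exact Or.inl ⟨h, ha⟩
        · exact Or.inr ⟨h, ha⟩
    · refine List.Nodup.append (Finset.sort_nodup _ _) (Finset.sort_nodup _ _) ?_
      intro a ha hb
      rw [Finset.mem_sort, Finset.mem_filter] at ha hb
      exact hb.2 ha.2
  · rw [List.pairwise_append]
    refine ⟨Finset.pairwise_sort _ _, Finset.pairwise_sort _ _, ?_⟩
    intro x hx y hy
    rw [Finset.mem_sort, Finset.mem_filter] at hx hy
    omega

lemma lex_mid (c : List ℕ) (u v : List ℕ) {a b : ℕ} (h : a < b) :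
    List.Lex (· < ·) (c ++ a :: u) (c ++ b :: v) := by
  induction c with
  | nil => exact List.Lex.rel h
  | cons x c ih => exact List.Lex.cons ih

lemma lex_of_take {β α : List ℕ} {k t : ℕ} (hk : k < α.length) (ht : t < α.getD k 0)
    (hβ : β.take (k+1) = α.take k ++ [t]) : List.Lex (· < ·) β α := by
  have hβeq : β = α.take k ++ t :: β.drop (k+1) := by
    conv_lhs => rw [← List.take_append_drop (k+1) β]
    rw [hβ]; simp
  have hαeq : α = α.take k ++ α.getD k 0 :: α.drop (k+1) := by
    conv_lhs => rw [← List.take_append_drop k α]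
    congr 1
    rw [List.drop_eq_getElem_cons hk, List.getD_eq_getElem _ _ hk]
  conv_lhs => rw [hβeq]
  conv_rhs => rw [hαeq]
  exact lex_mid _ _ _ ht

/-- first `k` rows are filled consecutively -/
def Good (α : List ℕ) (p : ℕ → ℕ × ℕ) (k : ℕ) : Prop :=
  ∀ j, j < k → ∀ e, ps α j < e → e ≤ ps α (j+1) → p e = (j, e - ps α j - 1)

section Tableau

variable {n : ℕ} {α : List ℕ} {p : ℕ → ℕ × ℕ}

lemma good_loc {k : ℕ} (hG : Good α p k) (e : ℕ) (h1 : 1 ≤ e) (h2 : e ≤ ps α k) :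
    ∃ j, j < k ∧ ps α j < e ∧ e ≤ ps α (j+1) ∧ p e = (j, e - ps α j - 1) := by
  obtain ⟨j, hj, h3, h4⟩ := find_j α k e h1 h2
  exact ⟨j, hj, h3, h4, hG j hj e h3 h4⟩

lemma row_lt_of_le {k : ℕ} (hG : Good α p k) (e : ℕ) (h1 : 1 ≤ e) (h2 : e ≤ ps α k) :
    (p e).1 < k := by
  obtain ⟨j, hj, _, _, hpe⟩ := good_loc hG e h1 h2
  rw [hpe]; exact hj

lemma cell_filled (hsit : IsSIT n α p) (r c : ℕ) (hr : r < α.length) (hc : c < α.getD r 0) :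
    ∃ e, 1 ≤ e ∧ e ≤ n ∧ p e = (r, c) := by
  obtain ⟨e, he, hpe⟩ := hsit.1.surjOn (show ((r, c) : ℕ × ℕ) ∈ sitCells α from ⟨hr, hc⟩)
  rw [Set.mem_Icc] at he
  exact ⟨e, he.1, he.2, hpe⟩

lemma row_ge (hα : IsComposition n α) (hsit : IsSIT n α p) {k : ℕ} (hk : k ≤ α.length)
    (hG : Good α p k) (e : ℕ) (h1 : ps α k < e) (h2 : e ≤ n) : k ≤ (p e).1 := by
  by_contra hlt
  push_neg at hlt
  have hmem : p e ∈ sitCells α := hsit.1.mapsTo (Set.mem_Icc.mpr ⟨by omega, h2⟩)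
  obtain ⟨hr, hc⟩ := hmem
  have hrk : (p e).1 < α.length := by omega
  have hub : ps α ((p e).1) + (p e).2 + 1 ≤ ps α ((p e).1 + 1) := by
    rw [ps_succ α _ hrk]; omega
  have he' : p (ps α ((p e).1) + (p e).2 + 1) = ((p e).1, (p e).2) := by
    have h := hG (p e).1 hlt (ps α ((p e).1) + (p e).2 + 1) (by omega) hub
    rw [h]
    refine Prod.ext rfl ?_
    show ps α (p e).1 + (p e).2 + 1 - ps α (p e).1 - 1 = (p e).2
    omega
  have hle : ps α ((p e).1) + (p e).2 + 1 ≤ ps α k :=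
    le_trans hub (ps_mono α (by omega))
  have heq : ps α ((p e).1) + (p e).2 + 1 = e := by
    apply hsit.1.injOn (Set.mem_Icc.mpr ⟨by omega, by omega⟩) (Set.mem_Icc.mpr ⟨by omega, h2⟩)
    rw [he']
  omega

lemma fill_row (hα : IsComposition n α) (hsit : IsSIT n α p) {k : ℕ} (hk : k < α.length)
    (hG : Good α p k) :
    ∀ t, 1 ≤ t → t ≤ α.getD k 0 →
      (∀ j, 1 ≤ j → j < t → ps α k + j ∉ sitDes n p) →
      ∀ j, 1 ≤ j → j ≤ t → p (ps α k + j) = (k, j - 1) := by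
  intro t
  induction t with
  | zero => intro h; omega
  | succ t ih =>
    intro ht1 htm hnd j hj1 hjt
    have hsk1 : ps α (k+1) = ps α k + α.getD k 0 := ps_succ α k hk
    have hn : ps α (k+1) ≤ n := by
      rw [← ps_top hα]; exact ps_mono α hk
    rcases Nat.lt_or_ge j (t+1) with hlt | hge
    · exact ih (by omega) (by omega) (fun j' h1 h2 => hnd j' h1 (by omega)) j hj1 (by omega)
    · have hj : j = t + 1 := by omega
      subst hj
      have hen : ps α k + (t + 1) ≤ n := by omega
      have hemem : ps α k + (t + 1) ∈ Set.Icc 1 n := Set.mem_Icc.mpr ⟨by omega, hen⟩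
      have hcell : (p (ps α k + (t+1))).1 < α.length ∧
          (p (ps α k + (t+1))).2 < α.getD (p (ps α k + (t+1))).1 0 := hsit.1.mapsTo hemem
      have hge' : k ≤ (p (ps α k + (t+1))).1 :=
        row_ge hα hsit (le_of_lt hk) hG _ (by omega) hen
      -- establish the row
      have hrow : (p (ps α k + (t+1))).1 = k := by
        rcases Nat.eq_zero_or_pos t with ht0 | ht0
        · -- base case: column is 0, use first-column increasing
          subst ht0
          simp only [Nat.zero_add] at hemem hcell hge' ⊢
          -- first show column = 0
          have hc0 : (p (ps α k + 1)).2 = 0 := by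
            by_contra hc
            have h0 : 0 < α.getD (p (ps α k + 1)).1 0 :=
              lt_of_le_of_lt (Nat.zero_le _) hcell.2
            obtain ⟨e', h1', h2', hpe'⟩ := cell_filled hsit (p (ps α k + 1)).1 0 hcell.1 h0
            have hlt' : e' < ps α k + 1 := by
              apply hsit.2.1 e' (Set.mem_Icc.mpr ⟨h1', h2'⟩) _ hemem
              · rw [hpe']
              · rw [hpe']; omega
            have := row_lt_of_le hG e' h1' (by omega)
            rw [hpe'] at this
            omega
          by_contra hne
          have hkr : k < (p (ps α k + 1)).1 := by omega
          obtain ⟨e', h1', h2', hpe'⟩ := cell_filled hsit k 0 hk (getD_pos hα hk)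
          have hlt' : e' < ps α k + 1 := by
            apply hsit.2.2.1 e' (Set.mem_Icc.mpr ⟨h1', h2'⟩) _ hemem
            · rw [hpe']
            · exact hc0
            · rw [hpe']; exact hkr
          have := row_lt_of_le hG e' h1' (by omega)
          rw [hpe'] at this
          omega
        · -- step case: use non-descent at ps α k + t
          have hprev : ∀ j', 1 ≤ j' → j' ≤ t → p (ps α k + j') = (k, j'-1) :=
            ih ht0 (by omega) (fun j' h1 h2 => hnd j' h1 (by omega))
          have hndt : ps α k + t ∉ sitDes n p := hnd t ht0 (by omega)
          have hrowt : (p (ps α k + t)).1 = k := by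
            rw [hprev t ht0 (le_refl t)]
          have hle : (p (ps α k + (t+1))).1 ≤ k := by
            by_contra h
            push_neg at h
            apply hndt
            rw [sitDes, Finset.mem_filter, Finset.mem_Icc]
            refine ⟨⟨by omega, by omega⟩, ?_⟩
            rw [hrowt]
            exact h
          omega
      -- establish the column
      have hcm : (p (ps α k + (t+1))).2 < α.getD k 0 := by
        have h := hcell.2
        rw [hrow] at h
        exact h
      have hcge : t ≤ (p (ps α k + (t+1))).2 := by
        by_contra h
        push_neg at h
        rcases Nat.eq_zero_or_pos t with ht0 | ht0
        · omega
        · have hprev : ∀ j', 1 ≤ j' → j' ≤ t → p (ps α k + j') = (k, j'-1) :=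
            ih ht0 (by omega) (fun j' h1 h2 => hnd j' h1 (by omega))
          have hpe := hprev ((p (ps α k + (t+1))).2 + 1) (by omega) (by omega)
          have heq : ps α k + ((p (ps α k + (t+1))).2 + 1) = ps α k + (t+1) := by
            apply hsit.1.injOn (Set.mem_Icc.mpr ⟨by omega, by omega⟩) hemem
            rw [hpe]
            exact (Prod.ext hrow (by simp)).symm
          omega
      have hcle : (p (ps α k + (t+1))).2 ≤ t := by
        by_contra h
        push_neg at h
        obtain ⟨e', h1', h2', hpe'⟩ := cell_filled hsit k t hk (by omega)
        have hlt' : e' < ps α k + (t+1) := by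
          apply hsit.2.1 e' (Set.mem_Icc.mpr ⟨h1', h2'⟩) _ hemem
          · rw [hpe', hrow]
          · rw [hpe']; exact h
        rcases Nat.lt_or_ge (ps α k) e' with he' | he'
        · have hprev : ∀ j', 1 ≤ j' → j' ≤ t → p (ps α k + j') = (k, j'-1) := by
            intro j' hj1' hj2'
            rcases Nat.eq_zero_or_pos t with ht0 | ht0
            · omega
            · exact ih ht0 (by omega) (fun j'' h1 h2 => hnd j'' h1 (by omega)) j' hj1' hj2'
          have hpe2 := hprev (e' - ps α k) (by omega) (by omega)
          rw [show ps α k + (e' - ps α k) = e' by omega] at hpe2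
          rw [hpe2] at hpe'
          have : e' - ps α k - 1 = t := congrArg Prod.snd hpe'
          omega
        · have := row_lt_of_le hG e' h1' he'
          rw [hpe'] at this
          omega
      refine Prod.ext hrow ?_
      simp
      omega

-- descents strictly below `ps α k` are exactly the partial sums `ps α j`, `1 ≤ j < k`
lemma des_iff_low (hα : IsComposition n α) (hsit : IsSIT n α p) {k : ℕ} (hk : k ≤ α.length)
    (hG : Good α p k) (i : ℕ) (h1 : 1 ≤ i) (h2 : i < ps α k) :
    (i ∈ sitDes n p ↔ ∃ j, 1 ≤ j ∧ j < k ∧ i = ps α j) := by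
  have hn : ps α k ≤ n := by rw [← ps_top hα]; exact ps_mono α hk
  obtain ⟨j, hj, h3, h4, hpe⟩ := good_loc hG i h1 (le_of_lt h2)
  rcases Nat.lt_or_ge i (ps α (j+1)) with hlt | hge
  · constructor
    · intro hd
      rw [sitDes, Finset.mem_filter] at hd
      have hpi1 : p (i+1) = (j, i + 1 - ps α j - 1) := hG j hj (i+1) (by omega) (by omega)
      rw [hpe, hpi1] at hd
      simp at hd
    · rintro ⟨j', hj1, hj2, rfl⟩
      exfalso
      rcases Nat.lt_or_ge j' (j+1) with h' | h'
      · have := ps_mono α (show j' ≤ j by omega); omega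
      · have := ps_mono α h'; omega
  · have hij : i = ps α (j+1) := by omega
    have hjk : j + 1 < k := by
      by_contra h
      push_neg at h
      have := ps_mono α h
      omega
    constructor
    · intro _
      exact ⟨j+1, by omega, hjk, hij⟩
    · intro _
      rw [sitDes, Finset.mem_filter, Finset.mem_Icc]
      refine ⟨⟨h1, by omega⟩, ?_⟩
      obtain ⟨j2, hj2k, hj2a, hj2b, hpe2⟩ := good_loc hG (i+1) (by omega) (by omega)
      rw [hpe, hpe2]
      show j < j2
      by_contra hle
      push_neg at hle
      have := ps_mono α (show j2 + 1 ≤ j + 1 by omega)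
      omega

lemma good_final (hα : IsComposition n α) (hsit : IsSIT n α p) (hG : Good α p α.length) :
    ∀ i, i ∈ sitDes n p ↔ ∃ j, 1 ≤ j ∧ j < α.length ∧ i = ps α j := by
  have h0 : ps α 0 = 0 := rfl
  intro i
  constructor
  · intro hi
    have hIcc := (Finset.mem_filter.mp hi).1
    rw [Finset.mem_Icc] at hIcc
    have h2 : i < ps α α.length := by rw [ps_top hα]; omega
    exact (des_iff_low hα hsit (le_refl _) hG i hIcc.1 h2).mp hi
  · rintro ⟨j, hj1, hj2, rfl⟩
    have h1 : ps α 0 < ps α j := ps_lt hα (by omega) (by omega)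
    have h2 : ps α j < ps α α.length := ps_lt hα hj2 (le_refl _)
    exact (des_iff_low hα hsit (le_refl _) hG _ (by omega) h2).mpr ⟨j, hj1, hj2, rfl⟩

lemma main_ind (hα : IsComposition n α) (hsit : IsSIT n α p) :
    ∀ d k, k ≤ α.length → α.length - k ≤ d → Good α p k →
    (∀ i, i ∈ sitDes n p ↔ ∃ j, 1 ≤ j ∧ j < α.length ∧ i = ps α j) ∨
    (∃ k t, k < α.length ∧ 1 ≤ t ∧ t < α.getD k 0 ∧
      (∀ j, 1 ≤ j → j ≤ k → ps α j ∈ sitDes n p) ∧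
      ps α k + t ∈ sitDes n p ∧
      (∀ i, i ∈ sitDes n p → i ≤ ps α k + t →
        (∃ j, 1 ≤ j ∧ j ≤ k ∧ i = ps α j) ∨ i = ps α k + t)) := by
  have h0 : ps α 0 = 0 := rfl
  intro d
  induction d with
  | zero =>
    intro k hk hd hG
    have hkL : k = α.length := by omega
    subst hkL
    exact Or.inl (good_final hα hsit hG)
  | succ d ihd =>
    intro k hk hd hG
    by_cases hkL : k = α.length
    · subst hkL
      exact Or.inl (good_final hα hsit hG)
    · have hkL' : k < α.length := by omega
      have hm : 0 < α.getD k 0 := getD_pos hα hkL'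
      set B := (sitDes n p).filter (fun i => ps α k < i ∧ i < ps α k + α.getD k 0) with hBdef
      by_cases hBne : B.Nonempty
      · right
        have hi₀mem := B.min'_mem hBne
        have hi₀ : B.min' hBne ∈ sitDes n p ∧ ps α k < B.min' hBne ∧
            B.min' hBne < ps α k + α.getD k 0 := by
          have h := Finset.mem_filter.mp hi₀mem
          exact ⟨h.1, h.2⟩
        set i₀ := B.min' hBne with hi₀def
        have hIcc := (Finset.mem_filter.mp hi₀.1).1
        rw [Finset.mem_Icc] at hIcc
        set t := i₀ - ps α k with htdef
        have ht1 : 1 ≤ t := by omega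
        have htm : t < α.getD k 0 := by omega
        have hst : ps α k + t = i₀ := by omega
        clear_value i₀
        have hnd : ∀ j, 1 ≤ j → j < t → ps α k + j ∉ sitDes n p := by
          intro j hj1 hj2 hmem
          have hmemB : ps α k + j ∈ B :=
            Finset.mem_filter.mpr ⟨hmem, by omega, by omega⟩
          have := Finset.min'_le B _ hmemB
          omega
        have hfill := fill_row hα hsit hkL' hG t ht1 (le_of_lt htm) hnd
        refine ⟨k, t, hkL', ht1, htm, ?_, ?_, ?_⟩
        · intro j hj1 hjk
          rcases Nat.lt_or_ge j k with hjlt | hjge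
          · have hpos : ps α 0 < ps α j := ps_lt hα (by omega) (by omega)
            exact (des_iff_low hα hsit (le_of_lt hkL') hG _ (by omega)
              (ps_lt hα hjlt (le_of_lt hkL'))).mpr ⟨j, hj1, hjlt, rfl⟩
          · have hjk' : j = k := by omega
            subst hjk'
            have hs1 : ps α 0 < ps α j := ps_lt hα (by omega) (by omega)
            rw [sitDes, Finset.mem_filter, Finset.mem_Icc]
            refine ⟨⟨by omega, by omega⟩, ?_⟩
            have hfe := hfill 1 (le_refl 1) ht1
            rw [hfe]
            exact row_lt_of_le hG (ps α j) (by omega) (le_refl _)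
        · rw [hst]; exact hi₀.1
        · intro i hiD hile
          have hIcc2 := (Finset.mem_filter.mp hiD).1
          rw [Finset.mem_Icc] at hIcc2
          rcases Nat.lt_or_ge i (ps α k) with hlt | hge
          · left
            obtain ⟨j, hj1, hj2, hj3⟩ :=
              (des_iff_low hα hsit (le_of_lt hkL') hG i hIcc2.1 hlt).mp hiD
            exact ⟨j, hj1, by omega, hj3⟩
          · rcases Nat.eq_or_lt_of_le hge with heq | hgt
            · left
              refine ⟨k, ?_, le_refl k, heq.symm⟩
              by_contra hk0
              have : k = 0 := by omega
              subst this
              omega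
            · rcases Nat.eq_or_lt_of_le hile with heq2 | hlt2
              · right; omega
              · exfalso
                exact hnd (i - ps α k) (by omega) (by omega)
                  (by rwa [show ps α k + (i - ps α k) = i by omega])
      · -- no descent inside the row: it fills up, recurse
        have hnd : ∀ j, 1 ≤ j → j < α.getD k 0 → ps α k + j ∉ sitDes n p := by
          intro j h1 h2 hmem
          exact hBne ⟨ps α k + j, Finset.mem_filter.mpr ⟨hmem, by omega, by omega⟩⟩
        have hfill := fill_row hα hsit hkL' hG (α.getD k 0) hm (le_refl _) hnd
        have hG' : Good α p (k+1) := by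
          intro j hjk e he1 he2
          rcases Nat.lt_or_ge j k with h | h
          · exact hG j h e he1 he2
          · have hjk' : j = k := by omega
            subst hjk'
            have hsk1 : ps α (j+1) = ps α j + α.getD j 0 := ps_succ α j hkL'
            have hf := hfill (e - ps α j) (by omega) (by omega)
            rw [show ps α j + (e - ps α j) = e by omega] at hf
            rw [hf]
        exact ihd (k+1) (by omega) (by omega) hG'

end Tableau

end Stmt14

set_option maxHeartbeats 1000000 in
/-- if `𝒯` is a standard immaculate tableau of shape `α` with
descent composition `β = comp(Des(𝒯))`, then `β ≤_l α` in the lexicographic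
order (so `L_{α,β} = 0` unless `β ≤_l α`). -/
theorem stmt14 (n : ℕ) (α : List ℕ) (hα : IsComposition n α)
    (T : {p : ℕ → ℕ × ℕ // IsSIT n α p}) :
    compOf n (sitDes n T.1) = α ∨ List.Lex (· < ·) (compOf n (sitDes n T.1)) α := by
  rcases Nat.eq_zero_or_pos n with hn0 | hn
  · left
    subst hn0
    rw [compOf, if_pos rfl]
    cases α with
    | nil => rfl
    | cons a l =>
      exfalso
      have h1 := hα.1 a (by simp)
      have h2 := hα.2
      simp only [List.sum_cons] at h2
      omega
  · have hL1 : 1 ≤ α.length := by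
      rcases α with _ | ⟨a, l⟩
      · exfalso; have := hα.2; simp at this; omega
      · simp
    have hG0 : Stmt14.Good α T.1 0 := fun j hj => absurd hj (by omega)
    have hps0 : Stmt14.ps α 0 = 0 := rfl
    have hpstop : Stmt14.ps α α.length = n := Stmt14.ps_top hα
    rcases Stmt14.main_ind hα T.2 α.length 0 (by omega) (by omega) hG0 with hgood | hbad
    · -- the descent composition equals α
      left
      have hS : (sitDes n T.1).sort (· ≤ ·) =
          (List.range (α.length - 1)).map (fun j => Stmt14.ps α (j+1)) := by
        apply Stmt14.sort_eq
        · rw [List.pairwise_map]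
          refine List.pairwise_lt_range.imp_of_mem ?_
          intro a b ha hb hab
          rw [List.mem_range] at ha hb
          exact Stmt14.ps_lt hα (by omega) (by omega)
        · intro x
          rw [hgood x, List.mem_map]
          constructor
          · rintro ⟨j, h1, h2, rfl⟩
            exact ⟨j - 1, List.mem_range.mpr (by omega), by rw [show j - 1 + 1 = j by omega]⟩
          · rintro ⟨j, hj, rfl⟩
            rw [List.mem_range] at hj
            exact ⟨j + 1, by omega, by omega, rfl⟩
      rw [compOf, if_neg (by omega), hS]
      apply List.ext_getElem
      · simp only [List.length_zipWith, List.length_append, List.length_map,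
          List.length_range, List.length_cons, List.length_singleton]
        omega
      · intro i h1 h2
        rw [List.getElem_zipWith]
        have hlen : ((List.range (α.length - 1)).map (fun j => Stmt14.ps α (j+1))).length
            = α.length - 1 := by simp
        have hfst : ((List.range (α.length - 1)).map (fun j => Stmt14.ps α (j+1)) ++ [n])[i]'(by
            simp only [List.length_append, List.length_map, List.length_range,
              List.length_singleton]; omega) = Stmt14.ps α (i+1) := by
          rcases Nat.lt_or_ge i (α.length - 1) with hi | hi
          · rw [List.getElem_append_left (by omega)]
            simp
          · rw [List.getElem_append_right (by omega)]
            have : i = α.length - 1 := by omega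
            subst this
            simp only [hlen, Nat.sub_self, List.getElem_singleton]
            rw [← hpstop]
            congr 1
            omega
        have hsnd : (0 :: (List.range (α.length - 1)).map (fun j => Stmt14.ps α (j+1)))[i]'(by
            simp only [List.length_cons, List.length_map, List.length_range]; omega)
            = Stmt14.ps α i := by
          rcases Nat.eq_zero_or_pos i with hi | hi
          · subst hi; simp [hps0]
          · obtain ⟨i', rfl⟩ : ∃ i', i = i' + 1 := ⟨i - 1, by omega⟩
            rw [List.getElem_cons_succ]
            simp only [List.getElem_map, List.getElem_range]
        rw [hfst, hsnd]
        show Stmt14.ps α (i + 1) - Stmt14.ps α i = α[i]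
        have hsucc := Stmt14.ps_succ α i h2
        rw [List.getD_eq_getElem _ _ h2] at hsucc
        have hmono := Stmt14.ps_mono α (show i ≤ i + 1 by omega)
        omega
    · -- lexicographically smaller
      right
      obtain ⟨k, t, hkL, ht1, htm, hdes, hdest, hchar⟩ := hbad
      set D := sitDes n T.1 with hD
      set m := Stmt14.ps α k + t with hm
      have hmn : Stmt14.ps α k + t ≤ n - 1 := by
        have := (Finset.mem_filter.mp hdest).1
        rw [Finset.mem_Icc] at this
        omega
      set l := (List.range k).map (fun j => Stmt14.ps α (j+1)) ++ [Stmt14.ps α k + t]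
        with hl
      have hfirst : (D.filter (fun x => x ≤ m)).sort (· ≤ ·) = l := by
        apply Stmt14.sort_eq
        · rw [hl, List.pairwise_append]
          refine ⟨?_, List.pairwise_singleton _ _, ?_⟩
          · rw [List.pairwise_map]
            refine List.pairwise_lt_range.imp_of_mem ?_
            intro a b ha hb hab
            rw [List.mem_range] at ha hb
            exact Stmt14.ps_lt hα (by omega) (by omega)
          · intro x hx y hy
            rw [List.mem_map] at hx
            obtain ⟨j, hj, rfl⟩ := hx
            rw [List.mem_range] at hj
            rw [List.mem_singleton] at hy
            subst hy
            have := Stmt14.ps_mono α (show j + 1 ≤ k by omega)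
            omega
        · intro x
          rw [Finset.mem_filter]
          constructor
          · rintro ⟨hxD, hxm⟩
            rcases hchar x hxD (by omega) with ⟨j, hj1, hj2, rfl⟩ | rfl
            · rw [hl, List.mem_append, List.mem_map]
              exact Or.inl ⟨j - 1, List.mem_range.mpr (by omega),
                by rw [show j - 1 + 1 = j by omega]⟩
            · rw [hl, List.mem_append, List.mem_singleton]
              exact Or.inr rfl
          · intro hx
            rw [hl, List.mem_append] at hx
            rcases hx with hx | hx
            · rw [List.mem_map] at hx
              obtain ⟨j, hj, rfl⟩ := hx
              rw [List.mem_range] at hj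
              have hmono := Stmt14.ps_mono α (show j + 1 ≤ k by omega)
              exact ⟨hdes (j+1) (by omega) (by omega), by omega⟩
            · rw [List.mem_singleton] at hx
              subst hx
              exact ⟨hdest, le_refl _⟩
      have hS : D.sort (· ≤ ·) = l ++ ((D.filter (fun x => ¬ x ≤ m)).sort (· ≤ ·)) := by
        rw [Stmt14.sort_split D m, hfirst]
      set rest := (D.filter (fun x => ¬ x ≤ m)).sort (· ≤ ·) with hrest
      apply Stmt14.lex_of_take hkL htm
      rw [compOf, if_neg (by omega), hS]
      have hllen : l.length = k + 1 := by
        rw [hl]; simp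
      apply List.ext_getElem
      · have hclen : (List.zipWith (fun a b => a - b) ((l ++ rest) ++ [n])
            (0 :: (l ++ rest))).length = k + 2 + rest.length := by
          simp only [List.length_zipWith, List.length_append, List.length_cons,
            List.length_singleton, hllen]
          omega
        rw [List.length_take, hclen, List.length_append, List.length_take,
          List.length_singleton]
        omega
      · intro i hi1 hi2
        have hik : i < k + 1 := by
          simp only [List.length_take] at hi1
          omega
        rw [List.getElem_take, List.getElem_zipWith]
        have hSl : ∀ (j : ℕ) (hj : j < k + 1) (hlen2 : j < (l ++ rest).length),
            (l ++ rest)[j] = (if j < k then Stmt14.ps α (j+1) else Stmt14.ps α k + t) := by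
          intro j hj hlen2
          rw [List.getElem_append_left (by omega)]
          simp only [hl]
          rcases Nat.lt_or_ge j k with h | h
          · rw [List.getElem_append_left (by simp; omega), if_pos h]
            simp
          · have hjk : j = k := by omega
            subst hjk
            rw [List.getElem_append_right (by simp), if_neg (by omega)]
            simp
        have hfst : ((l ++ rest) ++ [n])[i]'(by
            simp only [List.length_append, hllen, List.length_singleton]; omega) =
            (if i < k then Stmt14.ps α (i+1) else Stmt14.ps α k + t) := by
          rw [List.getElem_append_left (by simp only [List.length_append, hllen]; omega)]
          exact hSl i hik _
        have hsnd : (0 :: (l ++ rest))[i]'(by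
            simp only [List.length_cons, List.length_append, hllen]; omega) =
            Stmt14.ps α i := by
          rcases Nat.eq_zero_or_pos i with hi | hi
          · subst hi; simp [hps0]
          · obtain ⟨i', rfl⟩ : ∃ i', i = i' + 1 := ⟨i - 1, by omega⟩
            rw [List.getElem_cons_succ]
            rw [hSl i' (by omega) (by simp only [List.length_append, hllen]; omega)]
            rw [if_pos (by omega)]
        rw [hfst, hsnd]
        rcases Nat.lt_or_ge i k with h | h
        · rw [if_pos h]
          rw [List.getElem_append_left (by simp only [List.length_take]; omega)]
          rw [List.getElem_take]
          show Stmt14.ps α (i + 1) - Stmt14.ps α i = α[i]'(by omega)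
          have hsucc := Stmt14.ps_succ α i (by omega)
          rw [List.getD_eq_getElem _ _ (show i < α.length by omega)] at hsucc
          have hmono := Stmt14.ps_mono α (show i ≤ i + 1 by omega)
          clear * - hsucc hmono
          omega
        · have hik' : i = k := by omega
          clear * - hik' hkL ht1 hps0
          subst hik'
          rw [if_neg (by omega)]
          rw [List.getElem_append_right (by simp only [List.length_take]; omega)]
          simp only [List.length_take]
          have hmin : i ⊓ α.length = i := by omega
          simp only [hmin, Nat.sub_self, List.getElem_cons_zero]
          omega
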